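/- There exist constants C > 0 and λ₀ > 0 such that for all real λ ≥ λ₀ and all natural numbers l with l ≤ λ − √λ, one has l²·(l/λ)^l ≤ C/λ. -/

import Mathlib

/-- There are constants `C > 0`, `λ₀ > 0` such that for all `λ ≥ λ₀` and all naturals
`l ≤ λ − √λ`, `l²·(l/λ)^l ≤ C/λ`. -/
theorem sq_ratio_pow_le :
    ∃ C > (0 : ℝ), ∃ lam₀ > (0 : ℝ), ∀ lam : ℝ, lam₀ ≤ lam → ∀ l : ℕ,
      (l : ℝ) ≤ lam - Real.sqrt lam →
      (l : ℝ) ^ 2 * ((l : ℝ) / lam) ^ l ≤ C / lam := by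
  refine ⟨2985984, by norm_num, 4, by norm_num, ?_⟩
  intro lam hlam l hl
  have hlam0 : (0:ℝ) < lam := by linarith
  have hs0 : (0:ℝ) ≤ Real.sqrt lam := Real.sqrt_nonneg lam
  have hsq : Real.sqrt lam ^ 2 = lam := Real.sq_sqrt (le_of_lt hlam0)
  have hs2 : (2:ℝ) ≤ Real.sqrt lam := by nlinarith
  have hs : Real.sqrt lam ≤ lam := by nlinarith
  have hllam : (l:ℝ) ≤ lam := by linarith
  have hln : (0:ℝ) ≤ (l:ℝ) := Nat.cast_nonneg l
  have hbase0 : (0:ℝ) ≤ (l:ℝ)/lam := div_nonneg hln (le_of_lt hlam0)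
  have hbase1 : (l:ℝ)/lam ≤ 1 := div_le_one_of_le₀ hllam (le_of_lt hlam0)
  rcases le_or_gt l 4 with h4 | h5
  · -- small l : l ≤ 4
    rcases Nat.eq_zero_or_pos l with rfl | hl1
    · simpa using by positivity
    · have h4' : (l:ℝ) ≤ 4 := by exact_mod_cast h4
      have hp : ((l:ℝ)/lam) ^ l ≤ (l:ℝ)/lam :=
        pow_le_of_le_one hbase0 hbase1 hl1.ne'
      have h1 : (l:ℝ)^2 * ((l:ℝ)/lam) ^ l ≤ 16 * ((l:ℝ)/lam) := by
        have hsq' : (l:ℝ)^2 ≤ 16 := by nlinarith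
        nlinarith [pow_nonneg hbase0 l]
      have h2 : 16 * ((l:ℝ)/lam) ≤ 2985984 / lam := by
        rw [mul_div_assoc', div_le_div_iff₀ hlam0 hlam0]
        nlinarith
      linarith
  · have h5' : (5:ℝ) ≤ (l:ℝ) := by exact_mod_cast h5
    rcases le_or_gt (l:ℝ) (Real.sqrt lam) with hls | hls
    · -- 5 ≤ l ≤ √λ
      have hp : ((l:ℝ)/lam) ^ l ≤ ((l:ℝ)/lam) ^ 5 :=
        pow_le_pow_of_le_one hbase0 hbase1 h5
      have key : (l:ℝ)^2 * ((l:ℝ)/lam)^5 ≤ 1/lam := by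
        have h7 : (l:ℝ)^7 ≤ lam^3 * Real.sqrt lam := by
          calc (l:ℝ)^7 ≤ (Real.sqrt lam)^7 := pow_le_pow_left₀ hln hls 7
            _ = (Real.sqrt lam ^ 2)^3 * Real.sqrt lam := by ring
            _ = lam^3 * Real.sqrt lam := by rw [hsq]
        have heq : (l:ℝ)^2 * ((l:ℝ)/lam)^5 = (l:ℝ)^7 / lam^5 := by
          field_simp
        rw [heq, div_le_div_iff₀ (by positivity) hlam0]
        have hh : Real.sqrt lam * lam^4 ≤ lam * lam^4 :=
          mul_le_mul_of_nonneg_right hs (by positivity)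
        nlinarith
      have hmul : (l:ℝ)^2 * ((l:ℝ)/lam)^l ≤ (l:ℝ)^2 * ((l:ℝ)/lam)^5 :=
        mul_le_mul_of_nonneg_left hp (by positivity)
      have hfin : (1:ℝ)/lam ≤ 2985984/lam := by
        rw [div_le_div_iff₀ hlam0 hlam0]; nlinarith
      linarith
    · -- l > √λ
      set d : ℝ := lam - (l:ℝ) with hd
      have hd1 : Real.sqrt lam ≤ d := by rw [hd]; linarith
      have hexp1 : (l:ℝ)/lam ≤ Real.exp (-(d/lam)) := by
        have := Real.add_one_le_exp (-(d/lam))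
        have hle : (l:ℝ)/lam = 1 - d/lam := by rw [hd]; field_simp; ring
        rw [hle]; linarith
      have hexp2 : ((l:ℝ)/lam)^l ≤ Real.exp (-(↑l * d/lam)) := by
        calc ((l:ℝ)/lam)^l ≤ (Real.exp (-(d/lam)))^l := pow_le_pow_left₀ hbase0 hexp1 l
          _ = Real.exp (↑l * -(d/lam)) := (Real.exp_nat_mul _ l).symm
          _ = Real.exp (-(↑l * d/lam)) := by congr 1; ring
      have hld : lam * Real.sqrt lam / 2 ≤ (l:ℝ) * d := by
        nlinarith [mul_nonneg (sub_nonneg.mpr hls.le) (sub_nonneg.mpr hd1)]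
      have hmono : Real.exp (-(↑l * d/lam)) ≤ Real.exp (-(Real.sqrt lam / 2)) := by
        apply Real.exp_le_exp.mpr
        apply neg_le_neg
        rw [div_le_div_iff₀ two_pos hlam0]
        nlinarith
      have hexpbig : lam^3 / 2985984 ≤ Real.exp (Real.sqrt lam / 2) := by
        have hx : Real.sqrt lam / 12 ≤ Real.exp (Real.sqrt lam / 12) :=
          (Real.add_one_le_exp _).trans' (by linarith)
        have h6 : (Real.sqrt lam / 12)^6 ≤ (Real.exp (Real.sqrt lam / 12))^6 :=
          pow_le_pow_left₀ (by positivity) hx 6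
        have he : (Real.exp (Real.sqrt lam / 12))^6 = Real.exp (Real.sqrt lam / 2) := by
          rw [← Real.exp_nat_mul]; congr 1; push_cast; ring
        rw [he] at h6
        have hv : (Real.sqrt lam / 12)^6 = lam^3 / 2985984 := by
          rw [div_pow, show Real.sqrt lam ^ 6 = (Real.sqrt lam ^ 2)^3 by ring, hsq]
          norm_num
        rw [hv] at h6
        exact h6
      have hexps : Real.exp (-(Real.sqrt lam / 2)) ≤ 2985984 / lam^3 := by
        rw [Real.exp_neg]
        calc (Real.exp (Real.sqrt lam / 2))⁻¹ ≤ (lam^3/2985984)⁻¹ :=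
              inv_anti₀ (by positivity) hexpbig
          _ = 2985984/lam^3 := by field_simp
      have hl2 : (l:ℝ)^2 ≤ lam^2 := pow_le_pow_left₀ hln hllam 2
      calc (l:ℝ)^2 * ((l:ℝ)/lam)^l
          ≤ (l:ℝ)^2 * Real.exp (-(Real.sqrt lam / 2)) :=
            mul_le_mul_of_nonneg_left (hexp2.trans hmono) (by positivity)
        _ ≤ lam^2 * Real.exp (-(Real.sqrt lam / 2)) :=
            mul_le_mul_of_nonneg_right hl2 (Real.exp_nonneg _)
        _ ≤ lam^2 * (2985984 / lam^3) := mul_le_mul_of_nonneg_left hexps (by positivity)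
        _ = 2985984 / lam := by field_simp
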